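/- Let X be a compact metric space and f : X → X a continuous map. A set A ⊆ X is an attractor if and only if there exists a neighborhood U of A (i.e. A ⊆ int(U)) such that A = ω(U); in that case any such U is an attracting neighborhood, i.e. ω(U) ⊆ int(U). Moreover, every attracting neighborhood U contains a trapping region U' ⊆ U with ω(U') = ω(U). -/

import Mathlib

open Set

/-- The maximal invariant set in `U`: the union of all subsets `S ⊆ U` with `f '' S = S`. -/
def MaxInv {Y : Type*} (f : Y → Y) (U : Set Y) : Set Y :=
  ⋃₀ {S : Set Y | S ⊆ U ∧ f '' S = S}

/-- The maximal forward invariant set in `U`: the union of all subsets `S ⊆ U`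
with `f '' S ⊆ S`. -/
def MaxInvPlus {Y : Type*} (f : Y → Y) (U : Set Y) : Set Y :=
  ⋃₀ {S : Set Y | S ⊆ U ∧ f '' S ⊆ S}

/-- The omega-limit set `ω(U) = ⋂_{n ≥ 0} cl (⋃_{m ≥ n} f^[m] '' U)`. -/
def OmegaLim {Y : Type*} [TopologicalSpace Y] (f : Y → Y) (U : Set Y) : Set Y :=
  ⋂ n : ℕ, closure (⋃ m ≥ n, f^[m] '' U)

/-- The alpha-limit set `α(U) = ⋂_{n ≥ 0} cl (⋃_{m ≥ n} (f^[m]) ⁻¹' U)`. -/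
def AlphaLim {Y : Type*} [TopologicalSpace Y] (f : Y → Y) (U : Set Y) : Set Y :=
  ⋂ n : ℕ, closure (⋃ m ≥ n, f^[m] ⁻¹' U)

/-- A trapping region: a forward invariant set `U` with `f^[n] '' cl U ⊆ int U`
for some `n ≥ 1`. -/
def IsTrappingRegion {Y : Type*} [TopologicalSpace Y] (f : Y → Y) (U : Set Y) : Prop :=
  f '' U ⊆ U ∧ ∃ n : ℕ, 1 ≤ n ∧ f^[n] '' closure U ⊆ interior U

/-- An attractor: `A = Inv(U)` for some trapping region `U`. -/
def IsAttractor {Y : Type*} [TopologicalSpace Y] (f : Y → Y) (A : Set Y) : Prop :=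
  ∃ U : Set Y, IsTrappingRegion f U ∧ A = MaxInv f U

/-- An attracting neighborhood: `ω(U) ⊆ int U`. -/
def IsAttractingNbhd {Y : Type*} [TopologicalSpace Y] (f : Y → Y) (U : Set Y) : Prop :=
  OmegaLim f U ⊆ interior U

/-- A repelling region: a backward invariant set `U` with `(f^[n]) ⁻¹' cl U ⊆ int U`
for some `n ≥ 1`. -/
def IsRepellingRegion {Y : Type*} [TopologicalSpace Y] (f : Y → Y) (U : Set Y) : Prop :=
  f ⁻¹' U ⊆ U ∧ ∃ n : ℕ, 1 ≤ n ∧ f^[n] ⁻¹' closure U ⊆ interior U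

/-- A repeller: `R = Inv⁺(U)` for some repelling region `U`. -/
def IsRepeller {Y : Type*} [TopologicalSpace Y] (f : Y → Y) (R : Set Y) : Prop :=
  ∃ U : Set Y, IsRepellingRegion f U ∧ R = MaxInvPlus f U

/-- A repelling neighborhood: `α(U) ⊆ int U`. -/
def IsRepellingNbhd {Y : Type*} [TopologicalSpace Y] (f : Y → Y) (U : Set Y) : Prop :=
  AlphaLim f U ⊆ interior U

/-- A backward orbit: a sequence `γ : ℕ → Y` with `f (γ (k+1)) = γ k` for all `k`.
A backward orbit through `x` additionally satisfies `γ 0 = x`. -/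
def IsBackwardOrbit {Y : Type*} (f : Y → Y) (γ : ℕ → Y) : Prop :=
  ∀ k : ℕ, f (γ (k + 1)) = γ k

/-- The orbital alpha-limit set `α_o(γ) = ⋂_{n ≥ 0} cl {γ m : m ≥ n}`. -/
def OrbAlpha {Y : Type*} [TopologicalSpace Y] (γ : ℕ → Y) : Set Y :=
  ⋂ n : ℕ, closure (γ '' {m : ℕ | n ≤ m})

/-- The dual repeller of an attractor `A`: `A* = {x : ω(x) ∩ A = ∅}`. -/
def DualRepeller {Y : Type*} [TopologicalSpace Y] (f : Y → Y) (A : Set Y) : Set Y :=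
  {x : Y | OmegaLim f {x} ∩ A = ∅}

/-- The dual attractor of a repeller `R`:
`R* = {x : ∃ backward orbit γ through x with α_o(γ) ∩ R = ∅}`. -/
def DualAttractor {Y : Type*} [TopologicalSpace Y] (f : Y → Y) (R : Set Y) : Set Y :=
  {x : Y | ∃ γ : ℕ → Y, γ 0 = x ∧ IsBackwardOrbit f γ ∧ OrbAlpha γ ∩ R = ∅}
set_option linter.unusedSectionVars false
set_option linter.unusedVariables false

section Aux

variable {X : Type*} [MetricSpace X] [CompactSpace X] {f : X → X} {U : Set X}

lemma tail_mono (f : X → X) (U : Set X) : Antitone (fun n => ⋃ m ≥ n, f^[m] '' U) := by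
  intro n n' h x hx
  simp only [mem_iUnion, exists_prop] at hx ⊢
  obtain ⟨m, hm, h'⟩ := hx
  exact ⟨m, h.trans hm, h'⟩

lemma tail_mono' (f : X → X) {U V : Set X} (h : U ⊆ V) (n : ℕ) :
    (⋃ m ≥ n, f^[m] '' U) ⊆ ⋃ m ≥ n, f^[m] '' V :=
  iUnion₂_mono fun _ _ => image_mono h

lemma image_tail (f : X → X) (U : Set X) (n : ℕ) :
    f '' (⋃ m ≥ n, f^[m] '' U) = ⋃ m ≥ n + 1, f^[m] '' U := by
  ext y
  simp only [mem_image, mem_iUnion, exists_prop]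
  constructor
  · rintro ⟨x, ⟨m, hm, hx⟩, rfl⟩
    obtain ⟨u, hu, rfl⟩ := hx
    exact ⟨m + 1, Nat.succ_le_succ hm, u, hu, Function.iterate_succ_apply' f m u⟩
  · rintro ⟨m, hm, x, hx, rfl⟩
    obtain ⟨k, rfl⟩ := Nat.exists_eq_add_of_le hm
    refine ⟨f^[n + k] x, ⟨n + k, Nat.le_add_right n k, ⟨x, hx, rfl⟩⟩, ?_⟩
    have hee : n + 1 + k = (n + k) + 1 := by omega
    rw [hee, Function.iterate_succ_apply']

lemma omega_mono (f : X → X) {U V : Set X} (h : U ⊆ V) : OmegaLim f U ⊆ OmegaLim f V :=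
  iInter_mono fun n => closure_mono (tail_mono' f h n)

lemma closure_tail_compact (f : X → X) (U : Set X) (n : ℕ) :
    IsCompact (closure (⋃ m ≥ n, f^[m] '' U)) :=
  isClosed_closure.isCompact

lemma image_omega (hf : Continuous f) (U : Set X) :
    f '' OmegaLim f U = OmegaLim f U := by
  apply Subset.antisymm
  · refine subset_iInter fun n => ?_
    calc f '' OmegaLim f U ⊆ f '' closure (⋃ m ≥ n, f^[m] '' U) :=
          image_mono (iInter_subset _ n)
      _ ⊆ closure (f '' (⋃ m ≥ n, f^[m] '' U)) := image_closure_subset_closure_image hf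
      _ = closure (⋃ m ≥ n + 1, f^[m] '' U) := by rw [image_tail]
      _ ⊆ closure (⋃ m ≥ n, f^[m] '' U) := closure_mono (tail_mono f U (Nat.le_succ n))
  · intro y hy
    have hE : ∀ n : ℕ, (f ⁻¹' {y} ∩ closure (⋃ m ≥ n, f^[m] '' U)).Nonempty := by
      intro n
      have h1 : y ∈ closure (⋃ m ≥ n + 1, f^[m] '' U) := mem_iInter.mp hy (n + 1)
      have h2 : closure (⋃ m ≥ n + 1, f^[m] '' U) ⊆ f '' closure (⋃ m ≥ n, f^[m] '' U) := by
        rw [← image_tail]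
        refine closure_minimal (image_mono subset_closure) ?_
        exact ((closure_tail_compact f U n).image hf).isClosed
      obtain ⟨x, hx, hfx⟩ := h2 h1
      exact ⟨x, by simpa using hfx, hx⟩
    have hanti : Antitone (fun n : ℕ => f ⁻¹' {y} ∩ closure (⋃ m ≥ n, f^[m] '' U)) := by
      intro n n' h
      exact inter_subset_inter_right _ (closure_mono (tail_mono f U h))
    obtain ⟨x, hx⟩ := IsCompact.nonempty_iInter_of_directed_nonempty_isCompact_isClosed
      (fun n : ℕ => f ⁻¹' {y} ∩ closure (⋃ m ≥ n, f^[m] '' U))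
      hanti.directed_ge hE
      (fun n => (IsClosed.inter (isClosed_singleton.preimage hf) isClosed_closure).isCompact)
      (fun n => IsClosed.inter (isClosed_singleton.preimage hf) isClosed_closure)
    simp only [mem_iInter, mem_inter_iff, mem_preimage, mem_singleton_iff] at hx
    exact ⟨x, mem_iInter.mpr fun n => (hx n).2, (hx 0).1⟩

lemma iterate_image_omega (hf : Continuous f) (U : Set X) (n : ℕ) :
    f^[n] '' OmegaLim f U = OmegaLim f U := by
  induction n with
  | zero => simp
  | succ k ih =>
    rw [Function.iterate_succ', Set.image_comp, ih, image_omega hf]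

lemma maxInv_subset_omega (f : X → X) (U : Set X) : MaxInv f U ⊆ OmegaLim f U := by
  rintro x ⟨S, ⟨hSU, hSinv⟩, hxS⟩
  have hiter : ∀ m : ℕ, f^[m] '' S = S := by
    intro m
    induction m with
    | zero => simp
    | succ k ih => rw [Function.iterate_succ', Set.image_comp, ih, hSinv]
  refine mem_iInter.mpr fun n => subset_closure ?_
  refine mem_iUnion₂.mpr ⟨n, le_refl n, image_mono hSU ?_⟩
  rw [hiter n]; exact hxS

lemma exists_tail_subset (hf : Continuous f) {W : Set X} (hW : IsOpen W)
    (h : OmegaLim f U ⊆ W) :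
    ∃ N : ℕ, closure (⋃ m ≥ N, f^[m] '' U) ⊆ W := by
  by_contra h'
  push_neg at h'
  have hE : ∀ n : ℕ, (closure (⋃ m ≥ n, f^[m] '' U) ∩ Wᶜ).Nonempty := by
    intro n
    obtain ⟨x, hx1, hx2⟩ := not_subset.mp (h' n)
    exact ⟨x, hx1, hx2⟩
  have hanti : Antitone (fun n : ℕ => closure (⋃ m ≥ n, f^[m] '' U) ∩ Wᶜ) := by
    intro n n' hnn
    exact inter_subset_inter_left _ (closure_mono (tail_mono f U hnn))
  obtain ⟨x, hx⟩ := IsCompact.nonempty_iInter_of_directed_nonempty_isCompact_isClosed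
    (fun n : ℕ => closure (⋃ m ≥ n, f^[m] '' U) ∩ Wᶜ)
    hanti.directed_ge hE
    (fun n => (isClosed_closure.inter hW.isClosed_compl).isCompact)
    (fun n => isClosed_closure.inter hW.isClosed_compl)
  simp only [mem_iInter, mem_inter_iff, mem_compl_iff] at hx
  exact (hx 0).2 (h (mem_iInter.mpr fun n => (hx n).1))

lemma omega_subset_of_image_subset (hf : Continuous f) {V : Set X} {N : ℕ}
    (h : f^[N] '' U ⊆ V) : OmegaLim f U ⊆ OmegaLim f V := by
  refine subset_iInter fun n => ?_
  refine (iInter_subset _ (n + N)).trans (closure_mono ?_)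
  refine iUnion₂_subset fun m hm => ?_
  obtain ⟨k, hk, rfl⟩ : ∃ k, n ≤ k ∧ m = k + N := ⟨m - N, by omega, by omega⟩
  refine subset_trans ?_ (subset_iUnion₂ k hk)
  rw [Function.iterate_add, Set.image_comp]
  exact image_mono h

lemma fwd_invariant_iterate {U : Set X} (h : f '' U ⊆ U) (m : ℕ) : f^[m] '' U ⊆ U := by
  induction m with
  | zero => simp
  | succ k ih =>
    rw [Function.iterate_succ', Set.image_comp]
    exact (image_mono ih).trans h

lemma omega_subset_closure_of_fwd (h : f '' U ⊆ U) : OmegaLim f U ⊆ closure U := by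
  refine (iInter_subset _ 0).trans (closure_mono ?_)
  exact iUnion₂_subset fun m _ => fwd_invariant_iterate h m

lemma trapping_omega_subset_interior (hf : Continuous f) (hU : IsTrappingRegion f U) :
    OmegaLim f U ⊆ interior U := by
  obtain ⟨hfwd, n, _, hn⟩ := hU
  have h1 : OmegaLim f U = f^[n] '' OmegaLim f U := (iterate_image_omega hf U n).symm
  rw [h1]
  exact (image_mono (omega_subset_closure_of_fwd hfwd)).trans hn

lemma trapping_maxInv_eq_omega (hf : Continuous f) (hU : IsTrappingRegion f U) :
    MaxInv f U = OmegaLim f U := by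
  apply Subset.antisymm (maxInv_subset_omega f U)
  have h1 : OmegaLim f U ⊆ U :=
    (trapping_omega_subset_interior hf hU).trans interior_subset
  exact subset_sUnion_of_mem ⟨h1, image_omega hf U⟩

end Aux

section Main

variable {X : Type*} [MetricSpace X] [CompactSpace X] {f : X → X}

lemma main_part3 (hf : Continuous f) (U : Set X) (hU : OmegaLim f U ⊆ interior U) :
    ∃ U' : Set X, U' ⊆ U ∧ IsTrappingRegion f U' ∧ OmegaLim f U' = OmegaLim f U := by
  obtain ⟨N, hN⟩ := exists_tail_subset hf isOpen_interior hU
  set U' := ⋂ m ∈ Finset.range (N + 1), f^[m] ⁻¹' interior U with hU'def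
  have hopen : IsOpen U' :=
    isOpen_biInter_finset fun m _ => isOpen_interior.preimage (hf.iterate m)
  have hmem : ∀ x, x ∈ U' ↔ ∀ m, m < N + 1 → f^[m] x ∈ interior U := by
    intro x
    simp only [hU'def, mem_iInter, Finset.mem_range, mem_preimage]
  have hland' : ∀ k, N ≤ k → ∀ z ∈ closure U, f^[k] z ∈ interior U := by
    intro k hk z hz
    apply hN
    have h1 : f^[k] z ∈ closure (f^[k] '' U) :=
      image_closure_subset_closure_image (hf.iterate k) ⟨z, hz, rfl⟩
    refine closure_mono ?_ h1
    exact subset_iUnion₂ (s := fun m _ => f^[m] '' U) k hk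
  have hland : ∀ k, N ≤ k → ∀ x ∈ U, f^[k] x ∈ interior U :=
    fun k hk x hx => hland' k hk x (subset_closure hx)
  have hsub : U' ⊆ U := by
    intro x hx
    have := (hmem x).mp hx 0 (by omega)
    simpa using interior_subset this
  have hfwd : f '' U' ⊆ U' := by
    rintro _ ⟨x, hx, rfl⟩
    refine (hmem _).mpr fun m hm => ?_
    rw [← Function.iterate_succ_apply]
    by_cases h : m + 1 < N + 1
    · exact (hmem x).mp hx (m + 1) h
    · exact hland (m + 1) (by omega) x (hsub hx)
  have htrap : f^[N + 1] '' closure U' ⊆ interior U' := by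
    rw [hopen.interior_eq]
    rintro _ ⟨z, hz, rfl⟩
    have hzU : z ∈ closure U := closure_mono hsub hz
    refine (hmem _).mpr fun m hm => ?_
    rw [← Function.iterate_add_apply]
    exact hland' (m + (N + 1)) (by omega) z hzU
  have himg : f^[N] '' U ⊆ U' := by
    rintro _ ⟨x, hx, rfl⟩
    refine (hmem _).mpr fun m hm => ?_
    rw [← Function.iterate_add_apply]
    exact hland (m + N) (by omega) x hx
  refine ⟨U', hsub, ⟨hfwd, N + 1, by omega, htrap⟩, ?_⟩
  exact Subset.antisymm (omega_mono f hsub) (omega_subset_of_image_subset hf himg)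

theorem attractor_iff_omega_of_nbhd_aux
    {X : Type*} [MetricSpace X] [CompactSpace X]
    (f : X → X) (hf : Continuous f) (A : Set X) :
    (IsAttractor f A ↔ ∃ U : Set X, A ⊆ interior U ∧ A = OmegaLim f U) ∧
    (∀ U : Set X, A ⊆ interior U → A = OmegaLim f U → IsAttractingNbhd f U) ∧
    (∀ U : Set X, IsAttractingNbhd f U →
      ∃ U' : Set X, U' ⊆ U ∧ IsTrappingRegion f U' ∧
        OmegaLim f U' = OmegaLim f U) := by
  refine ⟨⟨?_, ?_⟩, ?_, ?_⟩
  · rintro ⟨U, hU, rfl⟩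
    refine ⟨U, ?_, (trapping_maxInv_eq_omega hf hU)⟩
    rw [trapping_maxInv_eq_omega hf hU]
    exact trapping_omega_subset_interior hf hU
  · rintro ⟨U, hAint, hAω⟩
    have hnbhd : OmegaLim f U ⊆ interior U := by rw [← hAω]; exact hAint
    obtain ⟨U', _, htrap, hωeq⟩ := main_part3 hf U hnbhd
    exact ⟨U', htrap, by rw [trapping_maxInv_eq_omega hf htrap, hωeq, ← hAω]⟩
  · intro U hAint hAω
    intro x hx
    rw [← hAω] at hx
    exact hAint hx
  · intro U hU
    exact main_part3 hf U hU

end Main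

/-- `A` is an attractor iff `A = ω(U)` for some neighborhood `U`
of `A`; such `U` is an attracting neighborhood, and every attracting
neighborhood contains a trapping region with the same omega-limit set. -/
theorem attractor_iff_omega_of_nbhd
    {X : Type*} [MetricSpace X] [CompactSpace X]
    (f : X → X) (hf : Continuous f) (A : Set X) :
    (IsAttractor f A ↔ ∃ U : Set X, A ⊆ interior U ∧ A = OmegaLim f U) ∧
    (∀ U : Set X, A ⊆ interior U → A = OmegaLim f U → IsAttractingNbhd f U) ∧
    (∀ U : Set X, IsAttractingNbhd f U →
      ∃ U' : Set X, U' ⊆ U ∧ IsTrappingRegion f U' ∧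
        OmegaLim f U' = OmegaLim f U) := by
  exact attractor_iff_omega_of_nbhd_aux f hf A
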